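/- Let K be a finite, pure, strongly connected simplicial complex of dimension n. Then −1 is an eigenvalue of the top down discriminant D_n^down (i.e. there is a nonzero g ∈ ℓ²(K_n) with D_n^down g = −g) if and only if K is coherently orientable. -/
import Mathlib


open scoped BigOperators

/-- The set of oriented `q`-simplices of a simplicial complex, together with the
orientation-reversal involution `bar` (writing `τ̄` for `bar τ`). -/
structure OrientedSet where
  K : Type
  bar : K → K
  bar_invol : ∀ τ, bar (bar τ) = τ
  bar_ne : ∀ τ, bar τ ≠ τ

/-- The data of an up graph (`mult = 2(q+1)`) or a down graph (`mult = 2`) on the set of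
oriented `q`-simplices: the sign function `η` (extended by `0` off the edge set, so that
`(τ₁, τ₂)` is an edge iff `eta τ₁ τ₂ ≠ 0`), the degree function (`deg_X`, resp. `deg_Y`),
and local finiteness; the degree of a vertex `τ` in the graph is `mult * deg τ`. -/
structure GroverStructure (O : OrientedSet) where
  eta : O.K → O.K → ℝ
  eta_symm : ∀ τ₁ τ₂, eta τ₁ τ₂ = eta τ₂ τ₁
  eta_vals : ∀ τ₁ τ₂, eta τ₁ τ₂ = 0 ∨ eta τ₁ τ₂ = 1 ∨ eta τ₁ τ₂ = -1
  eta_bar_left : ∀ τ₁ τ₂, eta (O.bar τ₁) τ₂ = - eta τ₁ τ₂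
  eta_self : ∀ τ, eta τ τ = 0
  eta_bar_self : ∀ τ, eta τ (O.bar τ) = 0
  deg : O.K → ℕ
  deg_pos : ∀ τ, 0 < deg τ
  deg_bar : ∀ τ, deg (O.bar τ) = deg τ
  mult : ℕ
  nbhdFinite : ∀ τ, {τ' | eta τ τ' ≠ 0}.Finite
  nbhd_card : ∀ τ, (nbhdFinite τ).toFinset.card = mult * deg τ

namespace GroverStructure

variable {O : OrientedSet} (Y : GroverStructure O)

/-- `(τ₁, τ₂)` is an oriented edge of the up/down graph. -/
def Edge (τ₁ τ₂ : O.K) : Prop := Y.eta τ₁ τ₂ ≠ 0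

/-- The normalization constant `(mult * deg τ)^(-1/2)`. -/
noncomputable def c (τ : O.K) : ℂ := ((Real.sqrt (Y.mult * Y.deg τ) : ℝ) : ℂ)⁻¹

/-- The operator `d : ℓ²(E) → ℓ²(K)`; elements of `ℓ²(E)` are represented as
functions on `K × K` (supported on the set of edges). -/
noncomputable def d (g : O.K × O.K → ℂ) : O.K → ℂ :=
  fun τ => Y.c τ * ∑ᶠ τ' ∈ {τ' | Y.eta τ τ' ≠ 0}, g (τ, τ')

/-- The adjoint `d* : ℓ²(K) → ℓ²(E)`. -/
noncomputable def dstar (f : O.K → ℂ) : O.K × O.K → ℂ :=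
  fun p => if Y.eta p.1 p.2 ≠ 0 then Y.c p.1 * f p.1 else 0

/-- The shift operator `(S g)(τ₁,τ₂) = η(τ₁,τ₂) • g(τ₂,τ₁)`. -/
noncomputable def shift (g : O.K × O.K → ℂ) : O.K × O.K → ℂ :=
  fun p => (Y.eta p.1 p.2 : ℂ) * g (p.2, p.1)

/-- The discriminant operator `D = d ∘ S ∘ d*`. -/
noncomputable def disc (f : O.K → ℂ) : O.K → ℂ := Y.d (Y.shift (Y.dstar f))

/-- The Grover walk `U = S (2 d* d − I)`. -/
noncomputable def walk (g : O.K × O.K → ℂ) : O.K × O.K → ℂ :=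
  Y.shift (fun p => 2 * Y.dstar (Y.d g) p - g p)

/-- Membership in `ℓ²(E)`: square summable and supported on the edge set. -/
def MemEdge (g : O.K × O.K → ℂ) : Prop :=
  Memℓp g 2 ∧ ∀ p : O.K × O.K, ¬ Y.Edge p.1 p.2 → g p = 0

end GroverStructure

/-- The orthogonal projection of `ℓ²(K_q)` onto the cochain space
`C^q(K,ℂ) = {f : f(τ̄) = -f(τ)}`. -/
noncomputable def projC (O : OrientedSet) (f : O.K → ℂ) : O.K → ℂ :=
  fun τ => (f τ - f (O.bar τ)) / 2

/-- The incidence signs `sgn(σ,τ)` between oriented simplices of two consecutive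
dimensions (`Olow` models `K_q`, `Ohigh` models `K_{q+1}`): `sgn σ τ ∈ {±1}` if the
underlying simplex `[τ]` is a face of `[σ]`, and `sgn σ τ = 0` otherwise. -/
structure SgnPair (Olow Ohigh : OrientedSet) where
  sgn : Ohigh.K → Olow.K → ℝ
  sgn_vals : ∀ σ τ, sgn σ τ = 0 ∨ sgn σ τ = 1 ∨ sgn σ τ = -1
  sgn_bar_left : ∀ σ τ, sgn (Ohigh.bar σ) τ = - sgn σ τ
  sgn_bar_right : ∀ σ τ, sgn σ (Olow.bar τ) = - sgn σ τ
  facesFinite : ∀ σ, {τ | sgn σ τ ≠ 0}.Finite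
  cofacesFinite : ∀ τ, {σ | sgn σ τ ≠ 0}.Finite

namespace SgnPair

variable {Olow Ohigh : OrientedSet} (P : SgnPair Olow Ohigh)

/-- The coboundary operator `(δ_q f)(σ) = (1/2) ∑_{τ ∈ K_q} sgn(σ,τ) f(τ)`. -/
noncomputable def delta (f : Olow.K → ℂ) : Ohigh.K → ℂ :=
  fun σ => (1 / 2 : ℂ) * ∑ᶠ τ, (P.sgn σ τ : ℂ) * f τ

/-- The adjoint coboundary `(δ_q* g)(τ) = (1/2) ∑_{σ ∈ K_{q+1}} sgn(σ,τ) g(σ)`. -/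
noncomputable def deltaStar (g : Ohigh.K → ℂ) : Olow.K → ℂ :=
  fun τ => (1 / 2 : ℂ) * ∑ᶠ σ, (P.sgn σ τ : ℂ) * g σ

end SgnPair

/-- The Grover structure `X` is the up graph structure at level `q` induced by the
incidence signs into level `q+1`: two oriented `q`-simplices span an edge iff their
underlying simplices are distinct up neighbors, `η^up(τ₁,τ₂) = sgn(σ,τ₁)·sgn(σ,τ₂)`
for (either orientation of) the common `(q+1)`-simplex `σ`, and `deg_X τ` is the number
of `(q+1)`-simplices containing `[τ]` as a face (each such simplex having exactly two
orientations). -/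
def GroverStructure.IsUpOf {O Oup : OrientedSet} (X : GroverStructure O)
    (P : SgnPair O Oup) : Prop :=
  (∀ τ₁ τ₂ : O.K, X.eta τ₁ τ₂ ≠ 0 ↔
      τ₁ ≠ τ₂ ∧ τ₁ ≠ O.bar τ₂ ∧ ∃ σ, P.sgn σ τ₁ ≠ 0 ∧ P.sgn σ τ₂ ≠ 0) ∧
  (∀ τ₁ τ₂ σ, τ₁ ≠ τ₂ → τ₁ ≠ O.bar τ₂ → P.sgn σ τ₁ ≠ 0 → P.sgn σ τ₂ ≠ 0 →
      X.eta τ₁ τ₂ = P.sgn σ τ₁ * P.sgn σ τ₂) ∧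
  (∀ τ, (P.cofacesFinite τ).toFinset.card = 2 * X.deg τ)

/-- The Grover structure `Y` is the down graph structure at level `q+1` induced by the
incidence signs from level `q`: two oriented `(q+1)`-simplices span an edge iff their
underlying simplices are distinct down neighbors, and
`η^down(σ₁,σ₂) = sgn(σ₁,μ)·sgn(σ₂,μ)` for (either orientation of) a common face `μ`. -/
def GroverStructure.IsDownOf {Odn O : OrientedSet} (Y : GroverStructure O)
    (P : SgnPair Odn O) : Prop :=
  (∀ σ₁ σ₂ : O.K, Y.eta σ₁ σ₂ ≠ 0 ↔
      σ₁ ≠ σ₂ ∧ σ₁ ≠ O.bar σ₂ ∧ ∃ μ, P.sgn σ₁ μ ≠ 0 ∧ P.sgn σ₂ μ ≠ 0) ∧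
  (∀ σ₁ σ₂ μ, σ₁ ≠ σ₂ → σ₁ ≠ O.bar σ₂ → P.sgn σ₁ μ ≠ 0 → P.sgn σ₂ μ ≠ 0 →
      Y.eta σ₁ σ₂ = P.sgn σ₁ μ * P.sgn σ₂ μ)

/-- `A ⊆ K_n` is an orientation: it contains exactly one of `σ`, `σ̄` for each `σ`. -/
def OrientedSet.IsOrientation (O : OrientedSet) (A : Set O.K) : Prop :=
  ∀ τ, τ ∈ A ↔ O.bar τ ∉ A

/-- `K` is coherently orientable: there is an orientation `K_n^o` such that
`sgn(σ₁,τ)·sgn(σ₂,τ) = −1` for any two down-neighboring `σ₁, σ₂ ∈ K_n^o`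
with common `(n−1)`-face `τ`. -/
def SgnPair.CoherentlyOrientable {Odn O : OrientedSet} (P : SgnPair Odn O) : Prop :=
  ∃ A : Set O.K, O.IsOrientation A ∧
    ∀ σ₁ ∈ A, ∀ σ₂ ∈ A, σ₁ ≠ σ₂ → σ₁ ≠ O.bar σ₂ →
      ∀ μ, P.sgn σ₁ μ ≠ 0 → P.sgn σ₂ μ ≠ 0 → P.sgn σ₁ μ * P.sgn σ₂ μ = -1

/-- `K` is totally non-coherently orientable: there is an orientation `K_n^o` such that
`sgn(σ₁,τ)·sgn(σ₂,τ) = 1` for any two down-neighboring `σ₁, σ₂ ∈ K_n^o`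
with common `(n−1)`-face `τ`. -/
def SgnPair.TotallyNonCoherentlyOrientable {Odn O : OrientedSet} (P : SgnPair Odn O) : Prop :=
  ∃ A : Set O.K, O.IsOrientation A ∧
    ∀ σ₁ ∈ A, ∀ σ₂ ∈ A, σ₁ ≠ σ₂ → σ₁ ≠ O.bar σ₂ →
      ∀ μ, P.sgn σ₁ μ ≠ 0 → P.sgn σ₂ μ ≠ 0 → P.sgn σ₁ μ * P.sgn σ₂ μ = 1


namespace GroverStructure

variable {O : OrientedSet} (Y : GroverStructure O)

lemma eta_sq {τ₁ τ₂ : O.K} (h : Y.eta τ₁ τ₂ ≠ 0) : Y.eta τ₁ τ₂ * Y.eta τ₁ τ₂ = 1 := by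
  rcases Y.eta_vals τ₁ τ₂ with h1 | h1 | h1 <;> simp [h1] at h ⊢

lemma c_ne_zero (hm : 0 < Y.mult) (τ : O.K) : Y.c τ ≠ 0 := by
  have hpos : (0:ℝ) < (Y.mult : ℝ) * (Y.deg τ : ℝ) := by
    have := Y.deg_pos τ; positivity
  simp only [c, ne_eq, inv_eq_zero, Complex.ofReal_eq_zero]
  exact ne_of_gt (Real.sqrt_pos.mpr hpos)

lemma c_mul_self (hm : 0 < Y.mult) (τ : O.K) :
    Y.c τ * Y.c τ = (((Y.mult : ℝ) * (Y.deg τ : ℝ) : ℝ) : ℂ)⁻¹ := by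
  rw [c, ← mul_inv, ← Complex.ofReal_mul, Real.mul_self_sqrt (by positivity)]

lemma c_mul_card (hm : 0 < Y.mult) (τ : O.K) :
    Y.c τ * ((Y.mult * Y.deg τ : ℕ) : ℂ) = (Y.c τ)⁻¹ := by
  have hne : (((Y.mult : ℝ) * (Y.deg τ : ℝ) : ℝ) : ℂ) ≠ 0 := by
    have := Y.deg_pos τ
    simp only [ne_eq, Complex.ofReal_eq_zero]
    positivity
  refine eq_inv_of_mul_eq_one_left ?_
  have hcast : (((Y.mult : ℝ) * (Y.deg τ : ℝ) : ℝ) : ℂ) = ((Y.mult * Y.deg τ : ℕ) : ℂ) := by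
    push_cast; ring
  rw [mul_comm, ← mul_assoc, c_mul_self Y hm, ← hcast, inv_mul_cancel₀ hne]

lemma c_sq_card (hm : 0 < Y.mult) (τ : O.K) :
    Y.c τ * Y.c τ * ((Y.mult * Y.deg τ : ℕ) : ℂ) = 1 := by
  rw [mul_assoc, c_mul_card Y hm, mul_inv_cancel₀ (c_ne_zero Y hm τ)]

lemma disc_eq (g : O.K → ℂ) (τ : O.K) :
    Y.disc g τ = Y.c τ * ∑ τ' ∈ (Y.nbhdFinite τ).toFinset,
      (Y.eta τ τ' : ℂ) * (Y.c τ' * g τ') := by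
  unfold disc d shift dstar
  congr 1
  rw [finsum_mem_eq_finite_toFinset_sum _ (Y.nbhdFinite τ)]
  refine Finset.sum_congr rfl fun τ' hτ' => ?_
  have he : Y.eta τ τ' ≠ 0 := by simpa using hτ'
  have he' : Y.eta τ' τ ≠ 0 := by rwa [Y.eta_symm]
  simp [he']

end GroverStructure

theorem eigenvalue_neg_one_iff_coherently_orientable
    (Odn O : OrientedSet) [Finite Odn.K] [Finite O.K] (hne : Nonempty O.K)
    (P : SgnPair Odn O)
    (Y : GroverStructure O) (hYm : Y.mult = 2) (hY : Y.IsDownOf P)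
    (hconn : ∀ σ σ' : O.K, σ' ≠ σ → σ' ≠ O.bar σ →
      Relation.ReflTransGen (fun a b => Y.eta a b ≠ 0) σ σ') :
    (∃ g : O.K → ℂ, g ≠ 0 ∧ Y.disc g = fun τ => - g τ) ↔ P.CoherentlyOrientable := by
  classical
  have hm : 0 < Y.mult := by omega
  haveI : Fintype O.K := Fintype.ofFinite _
  have hbar_inj : Function.Injective O.bar := fun a b hab => by
    rw [← O.bar_invol a, hab, O.bar_invol]
  set N : O.K → Finset O.K := fun τ => (Y.nbhdFinite τ).toFinset with hN
  have hmemN : ∀ τ τ', τ' ∈ N τ ↔ Y.eta τ τ' ≠ 0 := fun τ τ' => Set.Finite.mem_toFinset _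
  have hcardN : ∀ τ, (N τ).card = Y.mult * Y.deg τ := fun τ => Y.nbhd_card τ
  constructor
  · -- forward direction
    rintro ⟨g, hg0, hdisc⟩
    set h : O.K → ℂ := fun τ => Y.c τ * g τ with hh
    -- eigen equation in summed form
    have hsum : ∀ τ, ∑ τ' ∈ N τ, (Y.eta τ τ' : ℂ) * h τ' =
        -((Y.mult * Y.deg τ : ℕ) : ℂ) * h τ := by
      intro τ
      have hd := congrFun hdisc τ
      rw [Y.disc_eq] at hd
      apply mul_left_cancel₀ (Y.c_ne_zero hm τ)
      rw [hd]
      simp only [hh]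
      linear_combination (g τ) * (Y.c_sq_card hm τ)
    -- Q = 0 argument
    have hQterm : ∀ τ, ∑ τ' ∈ N τ, Complex.normSq ((Y.eta τ τ' : ℂ) * h τ' + h τ)
        = (∑ τ' ∈ N τ, Complex.normSq (h τ'))
          - ((Y.mult * Y.deg τ : ℕ) : ℝ) * Complex.normSq (h τ) := by
      intro τ
      have expand : ∀ τ' ∈ N τ, Complex.normSq ((Y.eta τ τ' : ℂ) * h τ' + h τ)
          = Complex.normSq (h τ') + Complex.normSq (h τ)
            + 2 * (((Y.eta τ τ' : ℂ) * h τ') * (starRingEnd ℂ) (h τ)).re := by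
        intro τ' hτ'
        rw [Complex.normSq_add, Complex.normSq_mul, Complex.normSq_ofReal,
          Y.eta_sq ((hmemN τ τ').mp hτ'), one_mul]
      have hre : ((-((Y.mult * Y.deg τ : ℕ) : ℂ) * h τ) * (starRingEnd ℂ) (h τ)).re
          = -((Y.mult * Y.deg τ : ℕ) : ℝ) * Complex.normSq (h τ) := by
        rw [mul_assoc, Complex.mul_conj]
        simp
      rw [Finset.sum_congr rfl expand, Finset.sum_add_distrib, Finset.sum_add_distrib,
        Finset.sum_const, ← Finset.mul_sum, ← Complex.re_sum, ← Finset.sum_mul, hsum τ,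
        hre, hcardN τ]
      push_cast [nsmul_eq_mul]
      ring
    have hswap : ∑ τ : O.K, ∑ τ' ∈ N τ, Complex.normSq (h τ')
        = ∑ τ : O.K, ((Y.mult * Y.deg τ : ℕ) : ℝ) * Complex.normSq (h τ) := by
      calc ∑ τ : O.K, ∑ τ' ∈ N τ, Complex.normSq (h τ')
          = ∑ τ : O.K, ∑ τ' : O.K, (if τ' ∈ N τ then Complex.normSq (h τ') else 0) := by
            refine Finset.sum_congr rfl fun τ _ => ?_
            rw [Finset.sum_ite_mem, Finset.univ_inter]
        _ = ∑ τ' : O.K, ∑ τ : O.K, (if τ' ∈ N τ then Complex.normSq (h τ') else 0) :=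
            Finset.sum_comm
        _ = ∑ τ' : O.K, ((Y.mult * Y.deg τ' : ℕ) : ℝ) * Complex.normSq (h τ') := by
            refine Finset.sum_congr rfl fun τ' _ => ?_
            have hiff : ∀ τ : O.K, (if τ' ∈ N τ then Complex.normSq (h τ') else 0)
                = (if τ ∈ N τ' then Complex.normSq (h τ') else 0) := by
              intro τ
              congr 1
              simp only [hmemN, eq_iff_iff]
              rw [Y.eta_symm]
            rw [Finset.sum_congr rfl fun τ _ => hiff τ, Finset.sum_ite_mem,
              Finset.univ_inter, Finset.sum_const, hcardN τ', nsmul_eq_mul]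
    have hQ : ∑ τ : O.K, ∑ τ' ∈ N τ, Complex.normSq ((Y.eta τ τ' : ℂ) * h τ' + h τ) = 0 := by
      rw [Finset.sum_congr rfl fun τ _ => hQterm τ, Finset.sum_sub_distrib, hswap, sub_self]
    have key : ∀ τ τ', Y.eta τ τ' ≠ 0 → (Y.eta τ τ' : ℂ) * h τ' = - h τ := by
      intro τ τ' he
      have h1 := (Finset.sum_eq_zero_iff_of_nonneg
        (fun τ _ => Finset.sum_nonneg fun τ' _ => Complex.normSq_nonneg _)).mp hQ
        τ (Finset.mem_univ τ)
      have h2 := (Finset.sum_eq_zero_iff_of_nonneg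
        (fun τ' _ => Complex.normSq_nonneg _)).mp h1 τ' ((hmemN τ τ').mpr he)
      have h3 := Complex.normSq_eq_zero.mp h2
      linear_combination h3
    -- build the coherent orientation from the eigenvector
    obtain ⟨τ₀, hτ₀⟩ : ∃ τ₀, g τ₀ ≠ 0 := by
      by_contra hc
      push_neg at hc
      exact hg0 (funext fun τ => hc τ)
    have hh0 : h τ₀ ≠ 0 := mul_ne_zero (Y.c_ne_zero hm τ₀) hτ₀
    have hNne : ∀ τ : O.K, ∃ τ', Y.eta τ τ' ≠ 0 := by
      intro τ
      have hc : 0 < (N τ).card := by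
        rw [hcardN]
        have := Y.deg_pos τ
        positivity
      obtain ⟨τ', hτ'⟩ := Finset.card_pos.mp hc
      exact ⟨τ', (hmemN τ τ').mp hτ'⟩
    have hbar : ∀ τ, h (O.bar τ) = - h τ := by
      intro τ
      obtain ⟨τ', he⟩ := hNne τ
      have h1 := key τ τ' he
      have he2 : Y.eta (O.bar τ) τ' ≠ 0 := by
        rw [Y.eta_bar_left]
        exact neg_ne_zero.mpr he
      have h2 := key (O.bar τ) τ' he2
      rw [Y.eta_bar_left] at h2
      push_cast at h2
      linear_combination h1 + h2
    have hpm : ∀ τ, h τ = h τ₀ ∨ h τ = - h τ₀ := by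
      have gen : ∀ τ, Relation.ReflTransGen (fun a b => Y.eta a b ≠ 0) τ₀ τ →
          (h τ = h τ₀ ∨ h τ = - h τ₀) := by
        intro τ hr
        induction hr with
        | refl => exact Or.inl rfl
        | @tail b c hab hbc ih =>
          have hk := key b c hbc
          rcases Y.eta_vals b c with h0 | h1 | h1
          · exact absurd h0 hbc
          · rw [h1] at hk; push_cast at hk
            rcases ih with h' | h'
            · exact Or.inr (by linear_combination hk - h')
            · exact Or.inl (by linear_combination hk - h')
          · rw [h1] at hk; push_cast at hk
            rcases ih with h' | h'
            · exact Or.inl (by linear_combination h' - hk)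
            · exact Or.inr (by linear_combination h' - hk)
      intro τ
      by_cases h1 : τ = τ₀
      · exact Or.inl (by rw [h1])
      by_cases h2 : τ = O.bar τ₀
      · exact Or.inr (by rw [h2, hbar])
      · exact gen τ (hconn τ₀ τ h1 h2)
    refine ⟨{τ | h τ = h τ₀}, ?_, ?_⟩
    · intro τ
      simp only [Set.mem_setOf_eq]
      constructor
      · intro ht hbt
        rw [hbar τ, ht] at hbt
        exact hh0 (by linear_combination (-1/2 : ℂ) * hbt)
      · intro hbt
        rcases hpm τ with h' | h'
        · exact h'
        · exact absurd (by rw [hbar τ, h', neg_neg]) hbt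
    · intro σ₁ h1 σ₂ h2 hne12 hnb μ hs1 hs2
      have hedge : Y.eta σ₁ σ₂ ≠ 0 := (hY.1 σ₁ σ₂).mpr ⟨hne12, hnb, μ, hs1, hs2⟩
      have heq := hY.2 σ₁ σ₂ μ hne12 hnb hs1 hs2
      have hk := key σ₁ σ₂ hedge
      simp only [Set.mem_setOf_eq] at h1 h2
      have hη : (Y.eta σ₁ σ₂ : ℂ) = -1 := by
        have hz : ((Y.eta σ₁ σ₂ : ℂ) + 1) * h τ₀ = 0 := by
          rw [h1, h2] at hk
          linear_combination hk
        rcases mul_eq_zero.mp hz with h' | h'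
        · linear_combination h'
        · exact absurd h' hh0
      rw [← heq]
      exact_mod_cast hη
  · -- reverse direction
    rintro ⟨A, hOr, hCoh⟩
    have hAbar : ∀ τ, τ ∉ A → O.bar τ ∈ A := by
      intro τ hτ
      by_contra hb
      exact hτ ((hOr τ).mpr hb)
    set ε : O.K → ℝ := fun τ => if τ ∈ A then 1 else -1 with hε
    have hε2 : ∀ τ, ε τ * ε τ = 1 := by
      intro τ; by_cases hτ : τ ∈ A <;> simp [hε, hτ]
    -- key sign identity on edges
    have hcoh_edge : ∀ τ τ', Y.eta τ τ' ≠ 0 → Y.eta τ τ' * ε τ' = - ε τ := by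
      intro τ τ' he
      obtain ⟨hne12, hnb, μ, hs1, hs2⟩ := (hY.1 τ τ').mp he
      have heq : Y.eta τ τ' = P.sgn τ μ * P.sgn τ' μ := hY.2 τ τ' μ hne12 hnb hs1 hs2
      set σ₀ : O.K := if τ ∈ A then τ else O.bar τ with hσ₀
      set σ₀' : O.K := if τ' ∈ A then τ' else O.bar τ' with hσ₀'
      have hσ₀A : σ₀ ∈ A := by
        by_cases hτ : τ ∈ A <;> simp [hσ₀, hτ, hAbar τ]
      have hσ₀'A : σ₀' ∈ A := by
        by_cases hτ : τ' ∈ A <;> simp [hσ₀', hτ, hAbar τ']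
      have hsgn₀ : P.sgn σ₀ μ = ε τ * P.sgn τ μ := by
        by_cases hτ : τ ∈ A <;> simp [hσ₀, hε, hτ, P.sgn_bar_left]
      have hsgn₀' : P.sgn σ₀' μ = ε τ' * P.sgn τ' μ := by
        by_cases hτ : τ' ∈ A <;> simp [hσ₀', hε, hτ, P.sgn_bar_left]
      have hnb2 : O.bar τ ≠ τ' := fun hc => hnb (by rw [← hc, O.bar_invol])
      have hnb3 : O.bar τ ≠ O.bar τ' := fun hc => hne12 (hbar_inj hc)
      have hσne : σ₀ ≠ σ₀' := by
        by_cases hτ : τ ∈ A <;> by_cases hτ' : τ' ∈ A <;>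
          simp [hσ₀, hσ₀', hτ, hτ', hne12, hnb, hnb2, hnb3]
      have hσnb : σ₀ ≠ O.bar σ₀' := by
        by_cases hτ : τ ∈ A <;> by_cases hτ' : τ' ∈ A <;>
          simp [hσ₀, hσ₀', hτ, hτ', O.bar_invol, hne12, hnb, hnb2, hnb3]
      have hsne1 : P.sgn σ₀ μ ≠ 0 := by
        rw [hsgn₀]
        exact mul_ne_zero (by by_cases hτ : τ ∈ A <;> simp [hε, hτ]) hs1
      have hsne2 : P.sgn σ₀' μ ≠ 0 := by
        rw [hsgn₀']
        exact mul_ne_zero (by by_cases hτ : τ' ∈ A <;> simp [hε, hτ]) hs2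
      have hC := hCoh σ₀ hσ₀A σ₀' hσ₀'A hσne hσnb μ hsne1 hsne2
      rw [hsgn₀, hsgn₀'] at hC
      have h2 : ε τ * ε τ' * Y.eta τ τ' = -1 := by rw [heq]; linear_combination hC
      by_cases hτ : τ ∈ A <;> by_cases hτ' : τ' ∈ A <;>
        simp [hε, hτ, hτ'] at h2 ⊢ <;> linarith
    refine ⟨fun τ => (ε τ : ℂ) * (Y.c τ)⁻¹, ?_, ?_⟩
    · intro hg
      have hcg := congrFun hg hne.some
      have hc := Y.c_ne_zero hm hne.some
      by_cases hτ : hne.some ∈ A <;> simp [hε, hτ, hc] at hcg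
    · funext τ
      rw [Y.disc_eq]
      have hterm : ∀ τ' ∈ N τ, (Y.eta τ τ' : ℂ) * (Y.c τ' * ((ε τ' : ℂ) * (Y.c τ')⁻¹))
          = -(ε τ : ℂ) := by
        intro τ' hτ'
        have he := (hmemN τ τ').mp hτ'
        have hc' := Y.c_ne_zero hm τ'
        have hval : Y.c τ' * ((ε τ' : ℂ) * (Y.c τ')⁻¹) = (ε τ' : ℂ) := by
          field_simp
        rw [hval, ← Complex.ofReal_mul, hcoh_edge τ τ' he, Complex.ofReal_neg]
      rw [Finset.sum_congr rfl hterm, Finset.sum_const, hcardN τ, nsmul_eq_mul]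
      have hcm := Y.c_mul_card hm τ
      show Y.c τ * (((Y.mult * Y.deg τ : ℕ) : ℂ) * -(ε τ : ℂ)) = -((ε τ : ℂ) * (Y.c τ)⁻¹)
      linear_combination (-(ε τ : ℂ)) * hcm
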